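/- For a fixed real L with 0 < L < n (and L not an integer), the function p(ℓ) = L * (n-1)!/(n+ℓ-1)! * Γ(n+ℓ-L-1)/Γ(n-L), ℓ = 1, 2, ..., defines a probability measure on the positive integers: the sum over ℓ ≥ 1 of p(ℓ) equals 1. -/

import Mathlib

open Real Filter Finset

/-- For an integer `n ≥ 2` and a real `L` with `0 < L < n` (`L` not an integer),
the function `p(ℓ) = L ⬝ (n-1)!/(n+ℓ-1)! ⬝ Γ(n+ℓ-L-1)/Γ(n-L)`, `ℓ = 1, 2, ...`,
is a probability distribution on the positive integers: `∑_{ℓ ≥ 1} p(ℓ) = 1`.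
(The sum below runs over `m = ℓ - 1 = 0, 1, 2, ...`.) -/
theorem mecke_discrete_waiting_time_prob_measure (n : ℕ) (hn : 2 ≤ n)
    (L : ℝ) (hL0 : 0 < L) (hLn : L < n) (hLint : ∀ m : ℤ, L ≠ m) :
    ∑' m : ℕ, L * ((n - 1).factorial : ℝ) / ((n + m).factorial : ℝ) *
        Gamma ((n : ℝ) + (m : ℝ) - L) / Gamma ((n : ℝ) - L) = 1 := by
  set f : ℕ → ℝ := fun m => L * ((n - 1).factorial : ℝ) / ((n + m).factorial : ℝ) *
        Gamma ((n : ℝ) + (m : ℝ) - L) / Gamma ((n : ℝ) - L) with hf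
  set t : ℕ → ℝ := fun m => ((n - 1).factorial : ℝ) * Gamma ((n : ℝ) + (m : ℝ) - L) /
        (((n + m - 1).factorial : ℝ) * Gamma ((n : ℝ) - L)) with ht
  have hGn : 0 < Gamma ((n : ℝ) - L) := Gamma_pos_of_pos (by
    have : (2:ℝ) ≤ n := by exact_mod_cast hn
    linarith)
  have hx : ∀ m : ℕ, (0:ℝ) < (n : ℝ) + m - L := fun m => by
    have : (0:ℝ) ≤ m := Nat.cast_nonneg m
    linarith
  have hG : ∀ m : ℕ, 0 < Gamma ((n : ℝ) + (m : ℝ) - L) := fun m => Gamma_pos_of_pos (hx m)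
  have hnm : ∀ m : ℕ, (0:ℝ) < (n : ℝ) + m := fun m => lt_trans hL0 (by
    have := hx m; linarith)
  -- factorial recurrence, cast to ℝ
  have hfac : ∀ m : ℕ, ((n + m).factorial : ℝ) = ((n:ℝ) + m) * ((n + m - 1).factorial : ℝ) := by
    intro m
    have hk : n + m - 1 + 1 = n + m := by omega
    calc ((n + m).factorial : ℝ) = ((n + m - 1 + 1).factorial : ℝ) := by rw [hk]
      _ = ((n + m - 1 + 1 : ℕ) : ℝ) * ((n + m - 1).factorial : ℝ) := by
          rw [Nat.factorial_succ]; push_cast; ring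
      _ = ((n:ℝ) + m) * ((n + m - 1).factorial : ℝ) := by rw [hk]; push_cast; ring
  -- Gamma recurrence
  have hGrec : ∀ m : ℕ, Gamma ((n : ℝ) + ((m+1 : ℕ) : ℝ) - L)
      = ((n:ℝ) + m - L) * Gamma ((n : ℝ) + (m : ℝ) - L) := by
    intro m
    have h1 : (n : ℝ) + ((m+1 : ℕ) : ℝ) - L = ((n:ℝ) + m - L) + 1 := by push_cast; ring
    rw [h1, Gamma_add_one (ne_of_gt (hx m))]
  have hfacpos : ∀ m : ℕ, (0:ℝ) < ((n + m - 1).factorial : ℝ) := fun m => by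
    exact_mod_cast Nat.factorial_pos _
  -- telescoping identity
  have htel : ∀ m : ℕ, f m = t m - t (m + 1) := by
    intro m
    have hi : n + (m + 1) - 1 = n + m := by omega
    simp only [hf, ht, hi, hGrec m, hfac m]
    have h1 := (hfacpos m).ne'
    have h2 := hGn.ne'
    have h3 := (hnm m).ne'
    field_simp
    ring
  -- t 0 = 1
  have ht0 : t 0 = 1 := by
    simp only [ht, Nat.cast_zero, add_zero]
    rw [div_self (by positivity)]
  -- partial sums
  have hpartial : ∀ M : ℕ, ∑ i ∈ range M, f i = 1 - t M := by
    intro M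
    have : ∑ i ∈ range M, f i = ∑ i ∈ range M, (t i - t (i+1)) :=
      Finset.sum_congr rfl fun i _ => htel i
    rw [this, Finset.sum_range_sub' t M, ht0]
  -- positivity of t
  have tpos : ∀ m : ℕ, 0 < t m := fun m =>
    div_pos (mul_pos (by exact_mod_cast Nat.factorial_pos _) (hG m))
      (mul_pos (hfacpos m) hGn)
  -- recurrence for t
  have htrec : ∀ m : ℕ, t (m + 1) = t m * (((n:ℝ) + m - L) / ((n:ℝ) + m)) := by
    intro m
    have hi : n + (m + 1) - 1 = n + m := by omega
    simp only [ht, hi, hGrec m, hfac m]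
    have h1 := (hfacpos m).ne'
    have h2 := hGn.ne'
    have h3 := (hnm m).ne'
    field_simp
  -- bound : t m ≤ exp (-(L * S m))
  have tbound : ∀ m : ℕ, t m ≤ Real.exp (-(L * ∑ k ∈ range m, 1 / ((n:ℝ) + k))) := by
    intro m
    induction m with
    | zero => simp [ht0]
    | succ m ih =>
      rw [htrec m, Finset.sum_range_succ]
      have hratio : ((n:ℝ) + m - L) / ((n:ℝ) + m) ≤ Real.exp (-(L / ((n:ℝ) + m))) := by
        have h1 : ((n:ℝ) + m - L) / ((n:ℝ) + m) = 1 - L / ((n:ℝ) + m) := by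
          field_simp
        rw [h1]
        have := Real.add_one_le_exp (-(L / ((n:ℝ) + m)))
        linarith
      have hratio0 : (0:ℝ) ≤ ((n:ℝ) + m - L) / ((n:ℝ) + m) :=
        div_nonneg (hx m).le (hnm m).le
      calc t m * (((n:ℝ) + m - L) / ((n:ℝ) + m))
          ≤ Real.exp (-(L * ∑ k ∈ range m, 1 / ((n:ℝ) + k))) * Real.exp (-(L / ((n:ℝ) + m))) :=
            mul_le_mul ih hratio hratio0 (Real.exp_nonneg _)
        _ = Real.exp (-(L * (∑ k ∈ range m, 1 / ((n:ℝ) + k) + 1 / ((n:ℝ) + m)))) := by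
            rw [← Real.exp_add]; congr 1; ring
  -- divergence of harmonic-type sum
  have hns : ¬ Summable (fun k : ℕ => 1 / ((n:ℝ) + k)) := by
    intro h
    have h' : Summable (fun k : ℕ => 1 / (((k + n : ℕ)) : ℝ)) := by
      apply h.congr
      intro k
      push_cast
      ring_nf
    exact Real.not_summable_one_div_natCast ((summable_nat_add_iff n).mp h')
  have hdiv : Tendsto (fun M : ℕ => ∑ k ∈ range M, 1 / ((n:ℝ) + k)) atTop atTop :=
    (not_summable_iff_tendsto_nat_atTop_of_nonneg (fun k => by positivity)).mp hns
  have hexp : Tendsto (fun M : ℕ => Real.exp (-(L * ∑ k ∈ range M, 1 / ((n:ℝ) + k))))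
      atTop (nhds 0) := by
    apply Real.tendsto_exp_atBot.comp
    apply tendsto_neg_atTop_atBot.comp
    exact hdiv.const_mul_atTop hL0
  have htlim : Tendsto t atTop (nhds 0) :=
    squeeze_zero (fun m => (tpos m).le) tbound hexp
  have hsumlim : Tendsto (fun M : ℕ => ∑ i ∈ range M, f i) atTop (nhds 1) := by
    have : Tendsto (fun M : ℕ => 1 - t M) atTop (nhds (1 - 0)) :=
      tendsto_const_nhds.sub htlim
    rw [sub_zero] at this
    exact this.congr fun M => (hpartial M).symm
  have fnonneg : ∀ m : ℕ, 0 ≤ f m := fun m =>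
    div_nonneg (mul_nonneg (div_nonneg (mul_nonneg hL0.le (Nat.cast_nonneg _))
      (Nat.cast_nonneg _)) (hG m).le) hGn.le
  have hHasSum : HasSum f 1 :=
    (hasSum_iff_tendsto_nat_of_nonneg fnonneg 1).mpr hsumlim
  exact hHasSum.tsum_eq
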